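/- Let μ > 0 and let N ≥ 2 be an integer. Then the double sum over integers 1 ≤ k ≤ j − 3 ≤ N with j − k < 2k of (j−k)⁻¹ · k^{μ−1} · N^{−μ} is bounded above by C · log N for a constant C depending only on μ. -/

import Mathlib

open Finset Real

/-- Harmonic-type bound: `∑_{d=1}^N 1/d ≤ 1 + log N`. -/
lemma aux_harm (N : ℕ) : ∑ d ∈ Finset.Icc 1 N, (d : ℝ)⁻¹ ≤ 1 + Real.log N := by
  have h := harmonic_le_one_add_log N
  rw [harmonic_eq_sum_Icc] at h
  calc ∑ d ∈ Finset.Icc 1 N, (d : ℝ)⁻¹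
      = ((∑ d ∈ Finset.Icc 1 N, (d : ℚ)⁻¹ : ℚ) : ℝ) := by push_cast; ring
    _ ≤ 1 + Real.log N := h

/-- Telescoping/comparison bound: `∑_{k=1}^N k^(μ-1) ≤ (1 + 1/μ) N^μ`. -/
lemma aux_sum_rpow (μ : ℝ) (hμ : 0 < μ) (N : ℕ) (hN : 1 ≤ N) :
    ∑ k ∈ Finset.Icc 1 N, (k : ℝ) ^ (μ - 1) ≤ (1 + 1/μ) * (N : ℝ) ^ μ := by
  have hN1 : (1 : ℝ) ≤ (N : ℝ) := by exact_mod_cast hN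
  rcases le_or_gt 1 μ with h1 | h1
  · -- μ ≥ 1 : each term ≤ N^(μ-1)
    have : ∑ k ∈ Finset.Icc 1 N, (k : ℝ) ^ (μ - 1) ≤
        ∑ _k ∈ Finset.Icc 1 N, (N : ℝ) ^ (μ - 1) := by
      apply Finset.sum_le_sum
      intro k hk
      rw [Finset.mem_Icc] at hk
      exact Real.rpow_le_rpow (by positivity) (by exact_mod_cast hk.2) (by linarith)
    refine this.trans ?_
    rw [Finset.sum_const, Nat.card_Icc, nsmul_eq_mul]
    have hNpos : (0 : ℝ) < (N : ℝ) := by linarith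
    have e1 : ((N + 1 - 1 : ℕ) : ℝ) = (N : ℝ) := by simp
    rw [e1]
    have e2 : (N : ℝ) * (N : ℝ) ^ (μ - 1) = (N : ℝ) ^ μ := by
      nth_rewrite 1 [← Real.rpow_one (N : ℝ)]
      rw [← Real.rpow_add hNpos]
      ring_nf
    rw [e2]
    nlinarith [Real.rpow_pos_of_pos hNpos μ, one_div_pos.mpr hμ]
  · -- μ < 1 : telescoping via Bernoulli
    have key : ∀ k : ℕ, 1 ≤ k → μ * (k : ℝ) ^ (μ - 1) ≤ (k : ℝ) ^ μ - ((k - 1 : ℕ) : ℝ) ^ μ := by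
      intro k hk
      have hkpos : (0 : ℝ) < (k : ℝ) := by exact_mod_cast hk
      have hb : (1 + (-(1 : ℝ) / k)) ^ μ ≤ 1 + μ * (-(1:ℝ)/k) := by
        apply rpow_one_add_le_one_add_mul_self _ hμ.le h1.le
        rw [neg_div, neg_le_neg_iff]
        rw [div_le_one hkpos]
        exact_mod_cast hk
      have h1k : (1 : ℝ) + (-(1:ℝ)/k) = ((k - 1 : ℕ) : ℝ) / k := by
        rw [Nat.cast_sub hk]
        field_simp
        ring
      rw [h1k] at hb
      have hb2 : (((k - 1 : ℕ) : ℝ) / k) ^ μ = ((k - 1 : ℕ) : ℝ) ^ μ / (k : ℝ) ^ μ := by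
        apply Real.div_rpow (by positivity) hkpos.le
      rw [hb2] at hb
      have hkμ : (0 : ℝ) < (k : ℝ) ^ μ := Real.rpow_pos_of_pos hkpos μ
      have hb3 : ((k - 1 : ℕ) : ℝ) ^ μ ≤ (1 + μ * (-(1:ℝ)/k)) * (k : ℝ) ^ μ := by
        rw [div_le_iff₀ hkμ] at hb
        linarith
      have hexp : (k : ℝ) ^ (μ - 1) = (k : ℝ) ^ μ / k := by
        rw [Real.rpow_sub hkpos, Real.rpow_one]
      rw [hexp]
      have e3 : (1 + μ * (-(1:ℝ)/k)) * (k : ℝ) ^ μ = (k : ℝ) ^ μ - μ * ((k:ℝ)^μ / k) := by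
        field_simp; ring
      rw [e3] at hb3
      linarith
    have htel : ∑ k ∈ Finset.Icc 1 N, ((k : ℝ) ^ μ - ((k - 1 : ℕ) : ℝ) ^ μ) = (N : ℝ) ^ μ := by
      rw [show ∑ k ∈ Finset.Icc 1 N, ((k : ℝ) ^ μ - ((k - 1 : ℕ) : ℝ) ^ μ)
          = ∑ i ∈ Finset.range N, ((fun n : ℕ => (n : ℝ) ^ μ) (i + 1) - (fun n : ℕ => (n : ℝ) ^ μ) i) by
        rw [show Finset.Icc 1 N = Finset.Ico 1 (N + 1) by rfl]
        rw [Finset.sum_Ico_eq_sum_range]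
        simp only [Nat.add_sub_cancel]
        apply Finset.sum_congr rfl
        intro i _
        simp [add_comm 1 i]]
      rw [Finset.sum_range_sub (fun n : ℕ => (n : ℝ) ^ μ)]
      simp [Real.zero_rpow hμ.ne']
    have hmain : μ * ∑ k ∈ Finset.Icc 1 N, (k : ℝ) ^ (μ - 1) ≤ (N : ℝ) ^ μ := by
      rw [Finset.mul_sum, ← htel]
      apply Finset.sum_le_sum
      intro k hk
      rw [Finset.mem_Icc] at hk
      exact key k hk.1
    have hNμ : (0 : ℝ) < (N : ℝ) ^ μ := Real.rpow_pos_of_pos (by linarith) μ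
    have h2 : ∑ k ∈ Finset.Icc 1 N, (k : ℝ) ^ (μ - 1) ≤ (N : ℝ) ^ μ / μ := by
      rw [le_div_iff₀ hμ]; linarith
    refine h2.trans ?_
    have e4 : (N : ℝ) ^ μ / μ = (1/μ) * (N : ℝ) ^ μ := by ring
    rw [e4]
    exact mul_le_mul_of_nonneg_right (by linarith) hNμ.le

/-- Case 1 summation estimate: for μ > 0, the double sum over 1 ≤ k ≤ j - 3 ≤ N
with j - k < 2k of (j-k)⁻¹ · k^(μ-1) · N^(-μ) is at most C(μ) · log N. -/
theorem stmt3 (μ : ℝ) (hμ : 0 < μ) :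
    ∃ C : ℝ, 0 < C ∧ ∀ N : ℕ, 2 ≤ N →
      ∑ k ∈ Finset.Icc 1 N,
        ∑ j ∈ (Finset.Icc (k + 3) N).filter (fun j => j - k < 2 * k),
          ((j : ℝ) - (k : ℝ))⁻¹ * (k : ℝ) ^ (μ - 1) * (N : ℝ) ^ (-μ)
        ≤ C * Real.log N := by
  have hlog2 : (0 : ℝ) < Real.log 2 := Real.log_pos (by norm_num)
  refine ⟨(1 + 1/μ) * (1 + 1/Real.log 2), by positivity, ?_⟩
  intro N hN
  have hN1 : 1 ≤ N := by omega
  have hNR : (2 : ℝ) ≤ (N : ℝ) := by exact_mod_cast hN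
  have hNpos : (0 : ℝ) < (N : ℝ) := by linarith
  have hlogN : Real.log 2 ≤ Real.log N := Real.log_le_log (by norm_num) hNR
  have hlogNpos : (0 : ℝ) < Real.log N := lt_of_lt_of_le hlog2 hlogN
  -- inner sum bound
  have hinner : ∀ k ∈ Finset.Icc 1 N,
      ∑ j ∈ (Finset.Icc (k + 3) N).filter (fun j => j - k < 2 * k),
        ((j : ℝ) - (k : ℝ))⁻¹ * (k : ℝ) ^ (μ - 1) * (N : ℝ) ^ (-μ)
      ≤ (1 + Real.log N) * ((k : ℝ) ^ (μ - 1) * (N : ℝ) ^ (-μ)) := by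
    intro k hk
    rw [Finset.mem_Icc] at hk
    have hkpos : (0 : ℝ) < (k : ℝ) := by exact_mod_cast hk.1
    have hfac : ∑ j ∈ (Finset.Icc (k + 3) N).filter (fun j => j - k < 2 * k),
        ((j : ℝ) - (k : ℝ))⁻¹ * (k : ℝ) ^ (μ - 1) * (N : ℝ) ^ (-μ)
        = (∑ j ∈ (Finset.Icc (k + 3) N).filter (fun j => j - k < 2 * k),
            ((j : ℝ) - (k : ℝ))⁻¹) * ((k : ℝ) ^ (μ - 1) * (N : ℝ) ^ (-μ)) := by
      rw [Finset.sum_mul]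
      apply Finset.sum_congr rfl
      intro j _; ring
    rw [hfac]
    have hS : ∑ j ∈ (Finset.Icc (k + 3) N).filter (fun j => j - k < 2 * k),
        ((j : ℝ) - (k : ℝ))⁻¹ ≤ ∑ d ∈ Finset.Icc 1 N, (d : ℝ)⁻¹ := by
      set s := (Finset.Icc (k + 3) N).filter (fun j => j - k < 2 * k) with hs
      have hmem : ∀ j ∈ s, k + 3 ≤ j ∧ j ≤ N := by
        intro j hj
        rw [hs, Finset.mem_filter, Finset.mem_Icc] at hj
        exact hj.1
      have him : ∑ j ∈ s, ((j : ℝ) - (k : ℝ))⁻¹ = ∑ d ∈ s.image (· - k), (d : ℝ)⁻¹ := by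
        rw [Finset.sum_image ?inj]
        · apply Finset.sum_congr rfl
          intro j hj
          have h3 := (hmem j hj).1
          rw [Nat.cast_sub (by omega)]
        case inj =>
          intro a ha b hb hab
          have h1 := (hmem a ha).1
          have h2 := (hmem b hb).1
          simp only at hab
          omega
      rw [him]
      apply Finset.sum_le_sum_of_subset_of_nonneg
      · intro d hd
        rw [Finset.mem_image] at hd
        obtain ⟨j, hj, rfl⟩ := hd
        obtain ⟨h1, h2⟩ := hmem j hj
        rw [Finset.mem_Icc]
        omega
      · intro d _ _
        positivity
    refine mul_le_mul_of_nonneg_right (hS.trans (aux_harm N)) ?_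
    positivity
  refine (Finset.sum_le_sum hinner).trans ?_
  rw [← Finset.mul_sum]
  have hsum2 : ∑ k ∈ Finset.Icc 1 N, (k : ℝ) ^ (μ - 1) * (N : ℝ) ^ (-μ) ≤ 1 + 1/μ := by
    rw [← Finset.sum_mul]
    have hsr := aux_sum_rpow μ hμ N hN1
    have hNμ : (0 : ℝ) < (N : ℝ) ^ (-μ) := Real.rpow_pos_of_pos hNpos _
    calc (∑ k ∈ Finset.Icc 1 N, (k : ℝ) ^ (μ - 1)) * (N : ℝ) ^ (-μ)
        ≤ (1 + 1/μ) * (N : ℝ) ^ μ * (N : ℝ) ^ (-μ) :=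
          mul_le_mul_of_nonneg_right hsr hNμ.le
      _ = 1 + 1/μ := by
          rw [mul_assoc, ← Real.rpow_add hNpos]
          simp
  have h1L : (0 : ℝ) ≤ 1 + Real.log N := by linarith
  calc (1 + Real.log N) * ∑ k ∈ Finset.Icc 1 N, (k : ℝ) ^ (μ - 1) * (N : ℝ) ^ (-μ)
      ≤ (1 + Real.log N) * (1 + 1/μ) := mul_le_mul_of_nonneg_left hsum2 h1L
    _ ≤ (1 + 1/μ) * (1 + 1/Real.log 2) * Real.log N := by
        have hμ' : (0 : ℝ) < 1 + 1/μ := by positivity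
        have hkey : 1 + Real.log N ≤ (1 + 1/Real.log 2) * Real.log N := by
          rw [add_mul, one_mul]
          have : 1 ≤ 1 / Real.log 2 * Real.log N := by
            rw [div_mul_eq_mul_div, one_mul]
            exact (one_le_div hlog2).mpr hlogN
          linarith
        nlinarith
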